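/- Let C > 0, δ > 0, T ≥ 0 and M ≥ 0, and suppose 8·e·δ²·C < 1. Then the series Σ_{n=0}^{∞} (M/n!)·(4Cδ)ⁿ·(T + 2nδ)ⁿ converges. -/

import Mathlib

/-- Summability of the perturbative series in the short-time-range case under the
smallness condition `8 e δ² C < 1`. -/
theorem short_range_series_summable (C δ T M : ℝ)
    (hC : 0 < C) (hδ : 0 < δ) (hT : 0 ≤ T) (hM : 0 ≤ M)
    (hsmall : 8 * Real.exp 1 * δ ^ 2 * C < 1) :
    Summable (fun n : ℕ =>
      (M / (n.factorial : ℝ)) * (4 * C * δ) ^ n * (T + 2 * (n : ℝ) * δ) ^ n) := by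
  set r : ℝ := 8 * Real.exp 1 * δ ^ 2 * C with hr
  have hrpos : 0 < r := by positivity
  have hsum : Summable (fun n : ℕ => M * Real.exp (T / (2 * δ)) * r ^ n) :=
    (summable_geometric_of_lt_one hrpos.le hsmall).mul_left _
  refine Summable.of_nonneg_of_le (fun n => by positivity) (fun n => ?_) hsum
  rcases Nat.eq_zero_or_pos n with hn | hn
  · subst hn
    simp only [pow_zero, Nat.factorial_zero, Nat.cast_one, mul_one, div_one]
    nlinarith [Real.one_le_exp (by positivity : (0:ℝ) ≤ T / (2 * δ))]
  · have hnpos : (0:ℝ) < n := Nat.cast_pos.mpr hn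
    -- Step A : (T + 2nδ)^n ≤ (2nδ)^n * exp (T/(2δ))
    have hA : (T + 2 * (n : ℝ) * δ) ^ n ≤ (2 * (n : ℝ) * δ) ^ n * Real.exp (T / (2 * δ)) := by
      have h2nδ : (0:ℝ) < 2 * (n : ℝ) * δ := by positivity
      have hsplit : T + 2 * (n : ℝ) * δ = (2 * (n : ℝ) * δ) * (1 + T / (2 * (n : ℝ) * δ)) := by
        field_simp
        ring
      rw [hsplit, mul_pow]
      refine mul_le_mul_of_nonneg_left ?_ (by positivity)
      have h1 : (1 + T / (2 * (n : ℝ) * δ)) ^ n ≤ Real.exp ((n : ℝ) * (T / (2 * (n : ℝ) * δ))) := by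
        calc (1 + T / (2 * (n : ℝ) * δ)) ^ n
            ≤ (Real.exp (T / (2 * (n : ℝ) * δ))) ^ n := by
              apply pow_le_pow_left₀ (by positivity)
              linarith [Real.add_one_le_exp (T / (2 * (n : ℝ) * δ))]
          _ = Real.exp ((n : ℝ) * (T / (2 * (n : ℝ) * δ))) := by
              rw [← Real.exp_nat_mul]
      have heq : (n : ℝ) * (T / (2 * (n : ℝ) * δ)) = T / (2 * δ) := by
        field_simp
      rwa [heq] at h1
    -- Step B : n^n ≤ n! * e^n
    have hB : ((n : ℝ)) ^ n ≤ (n.factorial : ℝ) * Real.exp 1 ^ n := by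
      have := Real.pow_div_factorial_le_exp (x := (n : ℝ)) hnpos.le n
      have hfac : (0:ℝ) < (n.factorial : ℝ) := by positivity
      rw [div_le_iff₀ hfac] at this
      calc ((n : ℝ)) ^ n ≤ Real.exp (n : ℝ) * (n.factorial : ℝ) := this
        _ = (n.factorial : ℝ) * Real.exp 1 ^ n := by
            rw [← Real.exp_nat_mul, mul_one, mul_comm]
    have hfacpos : (0:ℝ) < (n.factorial : ℝ) := by positivity
    calc M / (n.factorial : ℝ) * (4 * C * δ) ^ n * (T + 2 * (n : ℝ) * δ) ^ n
        ≤ M / (n.factorial : ℝ) * (4 * C * δ) ^ n *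
            ((2 * (n : ℝ) * δ) ^ n * Real.exp (T / (2 * δ))) := by
          refine mul_le_mul_of_nonneg_left hA (by positivity)
      _ = M * Real.exp (T / (2 * δ)) * ((8 * C * δ ^ 2) ^ n * ((n : ℝ) ^ n / (n.factorial : ℝ))) := by
          have hpow : (4 * C * δ) ^ n * (2 * (n : ℝ) * δ) ^ n
              = (8 * C * δ ^ 2) ^ n * (n : ℝ) ^ n := by
            rw [← mul_pow, ← mul_pow]; ring_nf
          field_simp
          linear_combination M * hpow
      _ ≤ M * Real.exp (T / (2 * δ)) * ((8 * C * δ ^ 2) ^ n * Real.exp 1 ^ n) := by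
          refine mul_le_mul_of_nonneg_left ?_ (by positivity)
          refine mul_le_mul_of_nonneg_left ?_ (by positivity)
          rw [div_le_iff₀ hfacpos]
          linarith [hB]
      _ = M * Real.exp (T / (2 * δ)) * r ^ n := by
          rw [← mul_pow, hr]; ring_nf
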